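/- Let α(u) = (cos u, sin u) parametrize the unit circle in ℝ², and define x(u,v) = ½(α(u) + α(v)), y(u,v) = ½(α(u) − α(v)), and f(u,v) = ¼(v − u + sin(u − v)). Then for all (u,v) ∈ ℝ²: (i) x(u,v) = cos((u−v)/2) · (cos((u+v)/2), sin((u+v)/2)); (ii) y(u,v) = sin((u−v)/2) · (−sin((u+v)/2), cos((u+v)/2)); (iii) ∂f/∂u(u,v) = ω(∂x/∂u(u,v), y(u,v)) and ∂f/∂v(u,v) = ω(∂x/∂v(u,v), y(u,v)). -/

import Mathlib

/-- The canonical symplectic form on `ℝ²`: `ω((a₁,a₂),(c₁,c₂)) = a₁c₂ − a₂c₁`. -/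
def omega2 (a c : ℝ × ℝ) : ℝ := a.1 * c.2 - a.2 * c.1

theorem stmt15
    (α : ℝ → ℝ × ℝ) (hα : ∀ u : ℝ, α u = (Real.cos u, Real.sin u))
    (x y : ℝ × ℝ → ℝ × ℝ) (f : ℝ × ℝ → ℝ)
    (hx : ∀ u v : ℝ, x (u, v) = ((1 : ℝ) / 2) • (α u + α v))
    (hy : ∀ u v : ℝ, y (u, v) = ((1 : ℝ) / 2) • (α u - α v))
    (hf : ∀ u v : ℝ, f (u, v) = (v - u + Real.sin (u - v)) / 4) :
    ∀ u v : ℝ,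
      x (u, v) = Real.cos ((u - v) / 2) •
        (Real.cos ((u + v) / 2), Real.sin ((u + v) / 2)) ∧
      y (u, v) = Real.sin ((u - v) / 2) •
        (-Real.sin ((u + v) / 2), Real.cos ((u + v) / 2)) ∧
      fderiv ℝ f (u, v) (1, 0) = omega2 (fderiv ℝ x (u, v) (1, 0)) (y (u, v)) ∧
      fderiv ℝ f (u, v) (0, 1) = omega2 (fderiv ℝ x (u, v) (0, 1)) (y (u, v)) := by
  -- explicit formulas for f and x as functions
  have hfe : f = fun p : ℝ × ℝ => ((1 : ℝ) / 4) * (p.2 - p.1 + Real.sin (p.1 - p.2)) := by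
    funext p; rw [hf p.1 p.2]; ring
  have hxe : x = fun p : ℝ × ℝ =>
      (((1 : ℝ) / 2) * (Real.cos p.1 + Real.cos p.2),
        ((1 : ℝ) / 2) * (Real.sin p.1 + Real.sin p.2)) := by
    funext p
    rw [hx p.1 p.2, hα, hα]
    simp [Prod.ext_iff, Prod.smul_def, smul_eq_mul]
  intro u v
  have hye : y (u, v) = ((Real.cos u - Real.cos v) / 2, (Real.sin u - Real.sin v) / 2) := by
    rw [hy, hα, hα]
    simp [Prod.ext_iff, Prod.smul_def, div_eq_inv_mul]
  -- derivative of f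
  have hfd : HasFDerivAt f
      (((1 : ℝ) / 4) • ((ContinuousLinearMap.snd ℝ ℝ ℝ - ContinuousLinearMap.fst ℝ ℝ ℝ) +
        Real.cos (u - v) • (ContinuousLinearMap.fst ℝ ℝ ℝ - ContinuousLinearMap.snd ℝ ℝ ℝ))) (u, v) := by
    rw [hfe]
    have h1 : HasFDerivAt (fun p : ℝ × ℝ => p.1 - p.2)
        (ContinuousLinearMap.fst ℝ ℝ ℝ - ContinuousLinearMap.snd ℝ ℝ ℝ) (u, v) :=
      (hasFDerivAt_fst.sub hasFDerivAt_snd)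
    have h2 : HasFDerivAt (fun p : ℝ × ℝ => Real.sin (p.1 - p.2))
        (Real.cos (u - v) • (ContinuousLinearMap.fst ℝ ℝ ℝ - ContinuousLinearMap.snd ℝ ℝ ℝ))
        (u, v) :=
      ((Real.hasDerivAt_sin (u - v)).comp_hasFDerivAt (u, v) h1 :)
    exact ((hasFDerivAt_snd.sub hasFDerivAt_fst).add h2).const_mul ((1 : ℝ) / 4)
  -- derivative of x
  have hxd : HasFDerivAt x
      ((((1 : ℝ) / 2) • ((- Real.sin u) • ContinuousLinearMap.fst ℝ ℝ ℝ +
          (- Real.sin v) • ContinuousLinearMap.snd ℝ ℝ ℝ)).prod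
        (((1 : ℝ) / 2) • ((Real.cos u) • ContinuousLinearMap.fst ℝ ℝ ℝ +
          (Real.cos v) • ContinuousLinearMap.snd ℝ ℝ ℝ))) (u, v) := by
    rw [hxe]
    have hc1 : HasFDerivAt (fun p : ℝ × ℝ => Real.cos p.1)
        ((- Real.sin u) • ContinuousLinearMap.fst ℝ ℝ ℝ) (u, v) :=
      ((Real.hasDerivAt_cos u).comp_hasFDerivAt (u, v) (hasFDerivAt_fst : HasFDerivAt (Prod.fst : ℝ × ℝ → ℝ) (ContinuousLinearMap.fst ℝ ℝ ℝ) (u, v)) :)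
    have hc2 : HasFDerivAt (fun p : ℝ × ℝ => Real.cos p.2)
        ((- Real.sin v) • ContinuousLinearMap.snd ℝ ℝ ℝ) (u, v) :=
      ((Real.hasDerivAt_cos v).comp_hasFDerivAt (u, v) (hasFDerivAt_snd : HasFDerivAt (Prod.snd : ℝ × ℝ → ℝ) (ContinuousLinearMap.snd ℝ ℝ ℝ) (u, v)) :)
    have hs1 : HasFDerivAt (fun p : ℝ × ℝ => Real.sin p.1)
        ((Real.cos u) • ContinuousLinearMap.fst ℝ ℝ ℝ) (u, v) :=
      ((Real.hasDerivAt_sin u).comp_hasFDerivAt (u, v) (hasFDerivAt_fst : HasFDerivAt (Prod.fst : ℝ × ℝ → ℝ) (ContinuousLinearMap.fst ℝ ℝ ℝ) (u, v)) :)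
    have hs2 : HasFDerivAt (fun p : ℝ × ℝ => Real.sin p.2)
        ((Real.cos v) • ContinuousLinearMap.snd ℝ ℝ ℝ) (u, v) :=
      ((Real.hasDerivAt_sin v).comp_hasFDerivAt (u, v) (hasFDerivAt_snd : HasFDerivAt (Prod.snd : ℝ × ℝ → ℝ) (ContinuousLinearMap.snd ℝ ℝ ℝ) (u, v)) :)
    exact HasFDerivAt.prodMk ((hc1.add hc2).const_mul ((1 : ℝ) / 2)) ((hs1.add hs2).const_mul ((1 : ℝ) / 2))
  have hf10 : fderiv ℝ f (u, v) (1, 0) = (Real.cos (u - v) - 1) / 4 := by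
    rw [hfd.fderiv]; simp; ring
  have hf01 : fderiv ℝ f (u, v) (0, 1) = (1 - Real.cos (u - v)) / 4 := by
    rw [hfd.fderiv]; simp; ring
  have hx10 : fderiv ℝ x (u, v) (1, 0) = (-Real.sin u / 2, Real.cos u / 2) := by
    rw [hxd.fderiv]; simp; constructor <;> ring
  have hx01 : fderiv ℝ x (u, v) (0, 1) = (-Real.sin v / 2, Real.cos v / 2) := by
    rw [hxd.fderiv]; simp; constructor <;> ring
  obtain ⟨a, b, rfl, rfl⟩ : ∃ a b : ℝ, u = a + b ∧ v = a - b :=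
    ⟨(u + v) / 2, (u - v) / 2, by ring, by ring⟩
  have e1 : (a + b - (a - b)) / 2 = b := by ring
  have e2 : (a + b + (a - b)) / 2 = a := by ring
  refine ⟨?_, ?_, ?_, ?_⟩
  · rw [hxe, e1, e2]
    simp [Prod.ext_iff, Prod.smul_def, Real.cos_add, Real.cos_sub, Real.sin_add, Real.sin_sub]
    constructor <;> ring
  · rw [hye, e1, e2]
    simp [Prod.ext_iff, Prod.smul_def, Real.cos_add, Real.cos_sub, Real.sin_add, Real.sin_sub]
    constructor <;> ring
  · rw [hf10, hx10, hye, omega2]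
    simp [Real.cos_add, Real.cos_sub, Real.sin_add, Real.sin_sub]
    nlinarith [Real.sin_sq_add_cos_sq a, Real.sin_sq_add_cos_sq b]
  · rw [hf01, hx01, hye, omega2]
    simp [Real.cos_add, Real.cos_sub, Real.sin_add, Real.sin_sub]
    nlinarith [Real.sin_sq_add_cos_sq a, Real.sin_sq_add_cos_sq b]
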